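/- (Schütte) Let n ≥ 1 and let S be a set of at least n+2 points in Euclidean space ℓ_2^n. Then the ratio (max_{x,y ∈ S} ‖x−y‖_2) / (min_{x,y ∈ S, x≠y} ‖x−y‖_2) is at least (1 + 2/n)^{1/2} if n is even, and at least (1 + 2/(n − (n+2)^{−1}))^{1/2} if n is odd. -/

import Mathlib

open Finset

noncomputable def norm2 {n : ℕ} (x : Fin n → ℝ) : ℝ :=
  (∑ m, (x m) ^ 2) ^ ((1 : ℝ) / 2)

def ip {n : ℕ} (x y : Fin n → ℝ) : ℝ := ∑ m, x m * y m

lemma norm2_sq {n : ℕ} (z : Fin n → ℝ) : norm2 z ^ 2 = ip z z := by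
  have h0 : (0:ℝ) ≤ ∑ m, (z m) ^ 2 := Finset.sum_nonneg fun m _ => sq_nonneg _
  have h : norm2 z ^ 2 = ((∑ m, (z m) ^ 2) ^ ((1:ℝ)/2)) ^ (2:ℕ) := rfl
  rw [h, ← Real.rpow_natCast (_ ^ ((1:ℝ)/2)) 2, ← Real.rpow_mul h0]
  norm_num [ip, sq]

lemma norm2_nonneg {n : ℕ} (z : Fin n → ℝ) : 0 ≤ norm2 z :=
  Real.rpow_nonneg (Finset.sum_nonneg fun m _ => sq_nonneg _) _

lemma norm2_pos {n : ℕ} {x y : Fin n → ℝ} (h : x ≠ y) : 0 < norm2 (x - y) := by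
  have hex : ∃ m, x m ≠ y m := by
    by_contra hc; push_neg at hc; exact h (funext hc)
  obtain ⟨m, hm⟩ := hex
  apply Real.rpow_pos_of_pos
  refine Finset.sum_pos' (fun i _ => sq_nonneg _) ⟨m, Finset.mem_univ m, ?_⟩
  have : (x - y) m ≠ 0 := sub_ne_zero.2 hm
  positivity

lemma ip_sub_sub {n : ℕ} (x y : Fin n → ℝ) :
    ip (x - y) (x - y) = ip x x + ip y y - 2 * ip x y := by
  unfold ip
  rw [Finset.mul_sum, ← Finset.sum_add_distrib, ← Finset.sum_sub_distrib]
  exact Finset.sum_congr rfl fun m _ => by simp [Pi.sub_apply]; ring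

lemma ip_sum_sum {n : ℕ} {ι : Type*} (A B : Finset ι) (p : ι → Fin n → ℝ)
    (α β : ι → ℝ) :
    ip (∑ i ∈ A, α i • p i) (∑ j ∈ B, β j • p j)
      = ∑ i ∈ A, ∑ j ∈ B, α i * β j * ip (p i) (p j) := by
  unfold ip
  simp only [Finset.sum_apply, Pi.smul_apply, smul_eq_mul, Finset.sum_mul,
    Finset.mul_sum]
  rw [Finset.sum_comm]
  rw [show (∑ j ∈ B, ∑ m : Fin n, ∑ i ∈ A, α i * p i m * (β j * p j m))
      = ∑ j ∈ B, ∑ i ∈ A, ∑ m : Fin n, α i * p i m * (β j * p j m) from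
    Finset.sum_congr rfl fun j _ => Finset.sum_comm]
  rw [Finset.sum_comm]
  exact Finset.sum_congr rfl fun i _ => Finset.sum_congr rfl fun j _ =>
    Finset.sum_congr rfl fun m _ => by ring

/-- The key expansion: weighted double sum of squared distances. -/
lemma sum_ip_expand {n : ℕ} {ι : Type*} (A B : Finset ι) (p : ι → Fin n → ℝ)
    (α β : ι → ℝ) (hα : ∑ i ∈ A, α i = 1) (hβ : ∑ j ∈ B, β j = 1) :
    ∑ i ∈ A, ∑ j ∈ B, α i * β j * ip (p i - p j) (p i - p j)
      = ∑ i ∈ A, α i * ip (p i) (p i) + ∑ j ∈ B, β j * ip (p j) (p j)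
        - 2 * ip (∑ i ∈ A, α i • p i) (∑ j ∈ B, β j • p j) := by
  calc ∑ i ∈ A, ∑ j ∈ B, α i * β j * ip (p i - p j) (p i - p j)
      = ∑ i ∈ A, ∑ j ∈ B, (β j * (α i * ip (p i) (p i))
          + α i * (β j * ip (p j) (p j)) - 2 * (α i * β j * ip (p i) (p j))) :=
        Finset.sum_congr rfl fun i _ => Finset.sum_congr rfl fun j _ => by
          rw [ip_sub_sub]; ring
    _ = ∑ i ∈ A, ((∑ j ∈ B, β j * (α i * ip (p i) (p i)))
          + (∑ j ∈ B, α i * (β j * ip (p j) (p j)))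
          - 2 * ∑ j ∈ B, α i * β j * ip (p i) (p j)) := by
        refine Finset.sum_congr rfl fun i _ => ?_
        rw [Finset.sum_sub_distrib, Finset.sum_add_distrib, Finset.mul_sum]
    _ = ∑ i ∈ A, (α i * ip (p i) (p i) + α i * (∑ j ∈ B, β j * ip (p j) (p j))
          - 2 * ∑ j ∈ B, α i * β j * ip (p i) (p j)) := by
        refine Finset.sum_congr rfl fun i _ => ?_
        rw [← Finset.sum_mul, hβ, one_mul, ← Finset.mul_sum]
    _ = (∑ i ∈ A, α i * ip (p i) (p i))
          + (∑ i ∈ A, α i * (∑ j ∈ B, β j * ip (p j) (p j)))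
          - 2 * ∑ i ∈ A, ∑ j ∈ B, α i * β j * ip (p i) (p j) := by
        rw [Finset.sum_sub_distrib, Finset.sum_add_distrib, Finset.mul_sum]
    _ = ∑ i ∈ A, α i * ip (p i) (p i) + ∑ j ∈ B, β j * ip (p j) (p j)
        - 2 * ip (∑ i ∈ A, α i • p i) (∑ j ∈ B, β j • p j) := by
        rw [← Finset.sum_mul, hα, one_mul, ip_sum_sum]

/-- Key inequality: disjoint weighted subsets with equal barycenters. -/
lemma key_ineq {n : ℕ} {ι : Type*} [DecidableEq ι] (p : ι → Fin n → ℝ) (A B : Finset ι)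
    (α β : ι → ℝ) (d D : ℝ)
    (hαnn : ∀ i ∈ A, 0 ≤ α i) (hβnn : ∀ j ∈ B, 0 ≤ β j)
    (hα1 : ∑ i ∈ A, α i = 1) (hβ1 : ∑ j ∈ B, β j = 1)
    (hbar : ∑ i ∈ A, α i • p i = ∑ j ∈ B, β j • p j)
    (hd : ∀ i ∈ A, ∀ j ∈ B, d ^ 2 ≤ ip (p i - p j) (p i - p j))
    (hDA : ∀ i ∈ A, ∀ k ∈ A, i ≠ k → ip (p i - p k) (p i - p k) ≤ D ^ 2)
    (hDB : ∀ i ∈ B, ∀ k ∈ B, i ≠ k → ip (p i - p k) (p i - p k) ≤ D ^ 2) :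
    2 * d ^ 2 ≤ D ^ 2 * (2 - 1 / (A.card : ℝ) - 1 / (B.card : ℝ)) := by
  have hAne : A.Nonempty := by
    rcases A.eq_empty_or_nonempty with h | h
    · exfalso; rw [h] at hα1; simp at hα1
    · exact h
  have hBne : B.Nonempty := by
    rcases B.eq_empty_or_nonempty with h | h
    · exfalso; rw [h] at hβ1; simp at hβ1
    · exact h
  -- the within-group bound
  have within : ∀ (C : Finset ι) (γ : ι → ℝ), (∀ i ∈ C, 0 ≤ γ i) →
      (∑ i ∈ C, γ i = 1) → C.Nonempty →
      (∀ i ∈ C, ∀ k ∈ C, i ≠ k → ip (p i - p k) (p i - p k) ≤ D ^ 2) →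
      ∑ i ∈ C, ∑ k ∈ C, γ i * γ k * ip (p i - p k) (p i - p k)
        ≤ D ^ 2 * (1 - 1 / (C.card : ℝ)) := by
    intro C γ hnn h1 hne hD
    have hD2 : (0:ℝ) ≤ D ^ 2 := sq_nonneg D
    have step1 : ∀ i ∈ C, ∑ k ∈ C, γ i * γ k * ip (p i - p k) (p i - p k)
        ≤ D ^ 2 * (γ i * (1 - γ i)) := by
      intro i hi
      rw [← Finset.add_sum_erase _ _ hi]
      have hzero : γ i * γ i * ip (p i - p i) (p i - p i) = 0 := by
        simp [ip, sub_self, Pi.sub_apply]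
      rw [hzero, zero_add]
      calc ∑ k ∈ C.erase i, γ i * γ k * ip (p i - p k) (p i - p k)
          ≤ ∑ k ∈ C.erase i, γ i * γ k * D ^ 2 := by
            refine Finset.sum_le_sum fun k hk => ?_
            have hki : k ≠ i := Finset.ne_of_mem_erase hk
            have hkC : k ∈ C := Finset.mem_of_mem_erase hk
            have hnn' : 0 ≤ γ i * γ k := mul_nonneg (hnn i hi) (hnn k hkC)
            exact mul_le_mul_of_nonneg_left (hD i hi k hkC (Ne.symm hki)) hnn'
        _ = D ^ 2 * (γ i * (1 - γ i)) := by
            rw [← Finset.sum_mul, ← Finset.mul_sum, Finset.sum_erase_eq_sub hi, h1]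
            ring
    have hcard : (0:ℝ) < (C.card : ℝ) := by
      exact_mod_cast Finset.card_pos.2 hne
    have hsq : 1 / (C.card : ℝ) ≤ ∑ i ∈ C, γ i ^ 2 := by
      rw [div_le_iff₀ hcard]
      have := sq_sum_le_card_mul_sum_sq (s := C) (f := γ)
      rw [h1] at this
      calc (1:ℝ) = 1 ^ 2 := by norm_num
        _ ≤ (C.card : ℝ) * ∑ i ∈ C, γ i ^ 2 := by exact_mod_cast this
        _ = (∑ i ∈ C, γ i ^ 2) * (C.card : ℝ) := by ring
    calc ∑ i ∈ C, ∑ k ∈ C, γ i * γ k * ip (p i - p k) (p i - p k)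
        ≤ ∑ i ∈ C, D ^ 2 * (γ i * (1 - γ i)) := Finset.sum_le_sum step1
      _ = D ^ 2 * (1 - ∑ i ∈ C, γ i ^ 2) := by
          rw [← Finset.mul_sum]
          congr 1
          have : ∀ i ∈ C, γ i * (1 - γ i) = γ i - γ i ^ 2 := fun i _ => by ring
          rw [Finset.sum_congr rfl this, Finset.sum_sub_distrib, h1]
      _ ≤ D ^ 2 * (1 - 1 / (C.card : ℝ)) := by
          apply mul_le_mul_of_nonneg_left _ hD2
          linarith
  -- expansions
  have e1 := sum_ip_expand A B p α β hα1 hβ1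
  have e2 := sum_ip_expand A A p α α hα1 hα1
  have e3 := sum_ip_expand B B p β β hβ1 hβ1
  rw [← hbar] at e1 e3
  -- cross sum lower bound
  have hcross : d ^ 2 ≤ ∑ i ∈ A, ∑ j ∈ B, α i * β j * ip (p i - p j) (p i - p j) := by
    have heq : ∑ i ∈ A, ∑ j ∈ B, α i * β j * d ^ 2 = d ^ 2 := by
      have h1 : ∀ i ∈ A, ∑ j ∈ B, α i * β j * d ^ 2 = α i * d ^ 2 := by
        intro i _
        rw [Finset.sum_congr rfl (fun j _ => show α i * β j * d ^ 2 = β j * (α i * d ^ 2) by ring),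
          ← Finset.sum_mul, hβ1, one_mul]
      rw [Finset.sum_congr rfl h1, ← Finset.sum_mul, hα1, one_mul]
    rw [← heq]
    refine Finset.sum_le_sum fun i hi => Finset.sum_le_sum fun j hj => ?_
    rw [mul_assoc, mul_assoc]
    exact mul_le_mul_of_nonneg_left
      (mul_le_mul_of_nonneg_left (hd i hi j hj) (hβnn j hj)) (hαnn i hi)
  have wA := within A α hαnn hα1 hAne hDA
  have wB := within B β hβnn hβ1 hBne hDB
  rw [e2] at wA
  rw [e3] at wB
  rw [e1] at hcross
  nlinarith [sq_nonneg D]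

/-- Radon-type lemma: from `n+2` points in `ℝⁿ` we extract two disjoint weighted
subsets with equal barycenters. -/
lemma radon_weights {n : ℕ} (T : Finset (Fin n → ℝ)) (hT : T.card = n + 2) :
    ∃ (A B : Finset (Fin n → ℝ)) (α β : (Fin n → ℝ) → ℝ),
      A ⊆ T ∧ B ⊆ T ∧ Disjoint A B ∧ A.card + B.card ≤ n + 2 ∧
      (∀ i ∈ A, 0 ≤ α i) ∧ (∀ j ∈ B, 0 ≤ β j) ∧
      (∑ i ∈ A, α i = 1) ∧ (∑ j ∈ B, β j = 1) ∧
      (∑ i ∈ A, α i • i = ∑ j ∈ B, β j • j) := by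
  classical
  have hnotaff : ¬ AffineIndependent ℝ (fun x : {x // x ∈ T} => (x : Fin n → ℝ)) := by
    intro h
    have h2 := h.card_le_finrank_succ
    have h3 : Module.finrank ℝ
        (vectorSpan ℝ (Set.range fun x : {x // x ∈ T} => (x : Fin n → ℝ)))
        ≤ Module.finrank ℝ (Fin n → ℝ) := Submodule.finrank_le _
    rw [Module.finrank_fin_fun] at h3
    rw [Fintype.card_coe, hT] at h2
    omega
  rw [affineIndependent_iff] at hnotaff
  push_neg at hnotaff
  obtain ⟨s, w, hw0, hwp, e, he, hwe⟩ := hnotaff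
  set P := s.filter (fun i => 0 < w i) with hP
  set N := s.filter (fun i => w i < 0) with hN
  have hPs : P ⊆ s := Finset.filter_subset _ _
  have hNs : N ⊆ s := Finset.filter_subset _ _
  have hPNdisj : Disjoint P N := by
    rw [Finset.disjoint_left]
    intro i hiP hiN
    have h1 := (Finset.mem_filter.1 hiP).2
    have h2 := (Finset.mem_filter.1 hiN).2
    linarith
  have hPNs : P ∪ N ⊆ s := Finset.union_subset hPs hNs
  have hzero : ∀ i ∈ s, i ∉ P ∪ N → w i = 0 := by
    intro i hi hni
    rw [Finset.mem_union] at hni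
    push_neg at hni
    have h1 : ¬ 0 < w i := fun h => hni.1 (Finset.mem_filter.2 ⟨hi, h⟩)
    have h2 : ¬ w i < 0 := fun h => hni.2 (Finset.mem_filter.2 ⟨hi, h⟩)
    linarith
  have hsum_split : ∑ i ∈ P, w i + ∑ i ∈ N, w i = 0 := by
    rw [← Finset.sum_union hPNdisj, Finset.sum_subset hPNs hzero, hw0]
  have hvec_split : ∑ i ∈ P, w i • (i : Fin n → ℝ) + ∑ i ∈ N, w i • (i : Fin n → ℝ) = 0 := by
    rw [← Finset.sum_union hPNdisj,
      Finset.sum_subset hPNs (fun i hi hni => by rw [hzero i hi hni, zero_smul]), hwp]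
  have hPne : P.Nonempty := by
    rw [Finset.nonempty_iff_ne_empty]
    intro hPe
    have hnonpos : ∀ i ∈ s, w i ≤ 0 := by
      intro i hi
      by_contra hc
      push_neg at hc
      have : i ∈ P := Finset.mem_filter.2 ⟨hi, hc⟩
      simp [hPe] at this
    exact hwe ((Finset.sum_eq_zero_iff_of_nonpos hnonpos).1 hw0 e he)
  have hNne : N.Nonempty := by
    rw [Finset.nonempty_iff_ne_empty]
    intro hNe
    have hnonneg : ∀ i ∈ s, 0 ≤ w i := by
      intro i hi
      by_contra hc
      push_neg at hc
      have : i ∈ N := Finset.mem_filter.2 ⟨hi, hc⟩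
      simp [hNe] at this
    exact hwe ((Finset.sum_eq_zero_iff_of_nonneg hnonneg).1 hw0 e he)
  set t := ∑ i ∈ P, w i with ht_def
  have ht : 0 < t := Finset.sum_pos (fun i hi => (Finset.mem_filter.1 hi).2) hPne
  -- the image sets and weights
  have hinjP : ∀ x ∈ P, ∀ y ∈ P, (x : Fin n → ℝ) = (y : Fin n → ℝ) → x = y :=
    fun x _ y _ h => Subtype.ext h
  have hinjN : ∀ x ∈ N, ∀ y ∈ N, (x : Fin n → ℝ) = (y : Fin n → ℝ) → x = y :=
    fun x _ y _ h => Subtype.ext h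
  refine ⟨P.image Subtype.val, N.image Subtype.val,
    fun x => if h : x ∈ T then w ⟨x, h⟩ / t else 0,
    fun x => if h : x ∈ T then - w ⟨x, h⟩ / t else 0, ?_, ?_, ?_, ?_, ?_, ?_, ?_, ?_, ?_⟩
  · intro x hx
    obtain ⟨i, _, rfl⟩ := Finset.mem_image.1 hx
    exact i.2
  · intro x hx
    obtain ⟨i, _, rfl⟩ := Finset.mem_image.1 hx
    exact i.2
  · rw [Finset.disjoint_left]
    intro x hxA hxB
    obtain ⟨i, hiP, hix⟩ := Finset.mem_image.1 hxA
    obtain ⟨j, hjN, hjx⟩ := Finset.mem_image.1 hxB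
    have : i = j := Subtype.ext (hix.trans hjx.symm)
    subst this
    exact (Finset.disjoint_left.1 hPNdisj) hiP hjN
  · rw [Finset.card_image_of_injOn hinjP, Finset.card_image_of_injOn hinjN,
      ← Finset.card_union_of_disjoint hPNdisj]
    calc (P ∪ N).card ≤ s.card := Finset.card_le_card hPNs
      _ ≤ Fintype.card {x // x ∈ T} := Finset.card_le_univ s
      _ = n + 2 := by rw [Fintype.card_coe, hT]
  · intro x hx
    obtain ⟨i, hiP, rfl⟩ := Finset.mem_image.1 hx
    dsimp only
    rw [dif_pos i.2]
    have : (⟨(i : Fin n → ℝ), i.2⟩ : {x // x ∈ T}) = i := Subtype.coe_eta _ _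
    rw [this]
    exact div_nonneg (le_of_lt (Finset.mem_filter.1 hiP).2) ht.le
  · intro x hx
    obtain ⟨j, hjN, rfl⟩ := Finset.mem_image.1 hx
    dsimp only
    rw [dif_pos j.2]
    have : (⟨(j : Fin n → ℝ), j.2⟩ : {x // x ∈ T}) = j := Subtype.coe_eta _ _
    rw [this]
    have := (Finset.mem_filter.1 hjN).2
    apply div_nonneg _ ht.le
    linarith
  · rw [Finset.sum_image hinjP]
    have : ∀ i ∈ P, (if h : (i : Fin n → ℝ) ∈ T then w ⟨(i : Fin n → ℝ), h⟩ / t else 0)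
        = w i / t := by
      intro i _
      rw [dif_pos i.2, Subtype.coe_eta]
    rw [Finset.sum_congr rfl this, ← Finset.sum_div, div_self ht.ne']
  · rw [Finset.sum_image hinjN]
    have : ∀ j ∈ N, (if h : (j : Fin n → ℝ) ∈ T then - w ⟨(j : Fin n → ℝ), h⟩ / t else 0)
        = - w j / t := by
      intro j _
      rw [dif_pos j.2, Subtype.coe_eta]
    rw [Finset.sum_congr rfl this]
    have hNsum : ∑ j ∈ N, w j = - t := by linarith
    have : ∑ j ∈ N, - w j / t = (- ∑ j ∈ N, w j) / t := by
      rw [← Finset.sum_div, ← Finset.sum_neg_distrib]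
    rw [this, hNsum, neg_neg, div_self ht.ne']
  · rw [Finset.sum_image hinjP, Finset.sum_image hinjN]
    have hPterm : ∀ i ∈ P,
        (if h : (i : Fin n → ℝ) ∈ T then w ⟨(i : Fin n → ℝ), h⟩ / t else 0) • (i : Fin n → ℝ)
          = t⁻¹ • (w i • (i : Fin n → ℝ)) := by
      intro i _
      rw [dif_pos i.2, Subtype.coe_eta, div_eq_inv_mul, mul_smul]
    have hNterm : ∀ j ∈ N,
        (if h : (j : Fin n → ℝ) ∈ T then - w ⟨(j : Fin n → ℝ), h⟩ / t else 0) • (j : Fin n → ℝ)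
          = t⁻¹ • (- (w j • (j : Fin n → ℝ))) := by
      intro j _
      rw [dif_pos j.2, Subtype.coe_eta,
        show - w j / t = t⁻¹ * (- w j) from by ring, mul_smul, neg_smul]
    rw [Finset.sum_congr rfl hPterm, Finset.sum_congr rfl hNterm,
      ← Finset.smul_sum, ← Finset.smul_sum]
    congr 1
    rw [Finset.sum_neg_distrib]
    exact eq_neg_of_add_eq_zero_left hvec_split

lemma frac_bound {n p q : ℕ} (hn : 1 ≤ n) (hp : 1 ≤ p) (hq : 1 ≤ q)
    (hpq : p + q ≤ n + 2) :
    (if Even n then 4 / ((n:ℝ) + 2)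
      else 4 * ((n:ℝ) + 2) / (((n:ℝ) + 1) * ((n:ℝ) + 3)))
      ≤ 1 / (p:ℝ) + 1 / (q:ℝ) := by
  have hP : (1:ℝ) ≤ (p:ℝ) := by exact_mod_cast hp
  have hQ : (1:ℝ) ≤ (q:ℝ) := by exact_mod_cast hq
  have hP0 : (0:ℝ) < (p:ℝ) := by linarith
  have hQ0 : (0:ℝ) < (q:ℝ) := by linarith
  have hPQ : (p:ℝ) + (q:ℝ) ≤ (n:ℝ) + 2 := by exact_mod_cast hpq
  have hn1 : (1:ℝ) ≤ (n:ℝ) := by exact_mod_cast hn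
  have h4 : 4 / ((p:ℝ) + (q:ℝ)) ≤ 1 / (p:ℝ) + 1 / (q:ℝ) := by
    rw [div_add_div _ _ hP0.ne' hQ0.ne', div_le_div_iff₀ (by linarith) (by positivity)]
    nlinarith [sq_nonneg ((p:ℝ) - (q:ℝ))]
  split_ifs with heven
  · calc 4 / ((n:ℝ) + 2) ≤ 4 / ((p:ℝ) + (q:ℝ)) :=
        div_le_div_of_nonneg_left (by norm_num) (by linarith) hPQ
      _ ≤ _ := h4
  · by_cases hm : p + q ≤ n + 1
    · have hPQ' : (p:ℝ) + (q:ℝ) ≤ (n:ℝ) + 1 := by exact_mod_cast hm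
      calc 4 * ((n:ℝ) + 2) / (((n:ℝ) + 1) * ((n:ℝ) + 3)) ≤ 4 / ((n:ℝ) + 1) := by
            rw [div_le_div_iff₀ (by positivity) (by linarith)]
            nlinarith
        _ ≤ 4 / ((p:ℝ) + (q:ℝ)) :=
            div_le_div_of_nonneg_left (by norm_num) (by linarith) hPQ'
        _ ≤ _ := h4
    · have hm2 : p + q = n + 2 := by omega
      have hodd : n % 2 = 1 := Nat.not_even_iff.1 heven
      have hne : p ≠ q := by
        intro h
        omega
      have hsq : 1 ≤ ((p:ℝ) - (q:ℝ))^2 := by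
        rcases lt_or_gt_of_ne hne with hlt | hgt
        · have : (p:ℝ) + 1 ≤ (q:ℝ) := by exact_mod_cast hlt
          nlinarith
        · have : (q:ℝ) + 1 ≤ (p:ℝ) := by exact_mod_cast hgt
          nlinarith
      have hm2' : (p:ℝ) + (q:ℝ) = (n:ℝ) + 2 := by exact_mod_cast hm2
      have h5 : 4 * ((p:ℝ) * (q:ℝ)) ≤ ((n:ℝ) + 2) ^ 2 - 1 := by nlinarith
      have h6 := mul_le_mul_of_nonneg_left h5 (show (0:ℝ) ≤ (n:ℝ) + 2 by linarith)
      rw [div_add_div _ _ hP0.ne' hQ0.ne', div_le_div_iff₀ (by positivity) (by positivity)]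
      nlinarith [h6]

lemma rpow_half_le {c r : ℝ} (hc : 0 ≤ c) (hr : 0 ≤ r) (h : c ≤ r ^ 2) :
    c ^ ((1:ℝ)/2) ≤ r := by
  have h1 : c ^ ((1:ℝ)/2) ≤ (r ^ 2) ^ ((1:ℝ)/2) :=
    Real.rpow_le_rpow hc h (by norm_num)
  calc c ^ ((1:ℝ)/2) ≤ (r ^ 2) ^ ((1:ℝ)/2) := h1
    _ = r := by
      rw [← Real.rpow_natCast r 2, ← Real.rpow_mul hr]
      norm_num

theorem stmt5 (n : ℕ) (hn : 1 ≤ n) (S : Finset (Fin n → ℝ)) (hS : n + 2 ≤ S.card) :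
    (if Even n then (1 + 2 / (n : ℝ)) ^ ((1 : ℝ) / 2)
      else (1 + 2 / ((n : ℝ) - ((n : ℝ) + 2)⁻¹)) ^ ((1 : ℝ) / 2)) ≤
    sSup {d : ℝ | ∃ x ∈ S, ∃ y ∈ S, d = norm2 (x - y)} /
      sInf {d : ℝ | ∃ x ∈ S, ∃ y ∈ S, x ≠ y ∧ d = norm2 (x - y)} := by
  classical
  set F : Finset ℝ := (S ×ˢ S).image (fun pr => norm2 (pr.1 - pr.2)) with hF
  set G : Finset ℝ :=
    ((S ×ˢ S).filter (fun pr => pr.1 ≠ pr.2)).image (fun pr => norm2 (pr.1 - pr.2)) with hG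
  have hKF : {d : ℝ | ∃ x ∈ S, ∃ y ∈ S, d = norm2 (x - y)} = ↑F := by
    ext u
    simp only [Set.mem_setOf_eq, hF, Finset.coe_image, Set.mem_image, Finset.mem_coe,
      Finset.mem_product, Finset.mem_coe]
    constructor
    · rintro ⟨x, hx, y, hy, rfl⟩
      exact ⟨(x, y), ⟨hx, hy⟩, rfl⟩
    · rintro ⟨⟨x, y⟩, ⟨hx, hy⟩, rfl⟩
      exact ⟨x, hx, y, hy, rfl⟩
  have hkG : {d : ℝ | ∃ x ∈ S, ∃ y ∈ S, x ≠ y ∧ d = norm2 (x - y)} = ↑G := by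
    ext u
    simp only [Set.mem_setOf_eq, hG, Finset.coe_image, Set.mem_image, Finset.mem_coe,
      Finset.mem_filter, Finset.mem_product]
    constructor
    · rintro ⟨x, hx, y, hy, hne, rfl⟩
      exact ⟨(x, y), ⟨⟨hx, hy⟩, hne⟩, rfl⟩
    · rintro ⟨⟨x, y⟩, ⟨⟨hx, hy⟩, hne⟩, rfl⟩
      exact ⟨x, hx, y, hy, hne, rfl⟩
  rw [hKF, hkG]
  set D := sSup (↑F : Set ℝ) with hD
  set d := sInf (↑G : Set ℝ) with hd
  -- basic facts about d and D
  have hDub : ∀ x ∈ S, ∀ y ∈ S, norm2 (x - y) ≤ D := by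
    intro x hx y hy
    apply le_csSup (Finset.bddAbove F)
    rw [hF]
    exact Finset.mem_coe.2 (Finset.mem_image.2 ⟨(x, y), Finset.mem_product.2 ⟨hx, hy⟩, rfl⟩)
  have hdlb : ∀ x ∈ S, ∀ y ∈ S, x ≠ y → d ≤ norm2 (x - y) := by
    intro x hx y hy hne
    apply csInf_le (Finset.bddBelow G)
    rw [hG]
    exact Finset.mem_coe.2 (Finset.mem_image.2
      ⟨(x, y), Finset.mem_filter.2 ⟨Finset.mem_product.2 ⟨hx, hy⟩, hne⟩, rfl⟩)
  have hGne : G.Nonempty := by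
    have h2 : 1 < S.card := by omega
    obtain ⟨a, ha, b, hb, hab⟩ := Finset.one_lt_card.1 h2
    exact ⟨norm2 (a - b), Finset.mem_image.2
      ⟨(a, b), Finset.mem_filter.2 ⟨Finset.mem_product.2 ⟨ha, hb⟩, hab⟩, rfl⟩⟩
  have hd0 : 0 < d := by
    have hmem := hGne.csInf_mem
    rw [← hd] at hmem
    obtain ⟨⟨x, y⟩, hxy, hval⟩ := Finset.mem_image.1 hmem
    have hne : x ≠ y := (Finset.mem_filter.1 hxy).2
    rw [← hval]
    exact norm2_pos hne
  have hD0 : 0 < D := by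
    have hmem := hGne.csInf_mem
    obtain ⟨⟨x, y⟩, hxy, hval⟩ := Finset.mem_image.1 hmem
    have hxS := (Finset.mem_product.1 (Finset.mem_filter.1 hxy).1).1
    have hyS := (Finset.mem_product.1 (Finset.mem_filter.1 hxy).1).2
    calc (0:ℝ) < d := hd0
      _ ≤ norm2 (x - y) := le_of_eq (by rw [hd, ← hval])
      _ ≤ D := hDub x hxS y hyS
  -- extract n+2 points and apply Radon
  obtain ⟨T, hTS, hTcard⟩ := Finset.exists_subset_card_eq hS
  obtain ⟨A, B, α, β, hAT, hBT, hdisj, hcard, hαnn, hβnn, hα1, hβ1, hbar⟩ :=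
    radon_weights T hTcard
  have hAS : A ⊆ S := hAT.trans hTS
  have hBS : B ⊆ S := hBT.trans hTS
  have hkey := key_ineq (fun x => x) A B α β d D hαnn hβnn hα1 hβ1 hbar
    (fun i hi j hj => by
      have hij : i ≠ j := fun h => Finset.disjoint_left.1 hdisj hi (h ▸ hj)
      have := hdlb i (hAS hi) j (hBS hj) hij
      calc d ^ 2 ≤ norm2 (i - j) ^ 2 := pow_le_pow_left₀ hd0.le this 2
        _ = ip (i - j) (i - j) := norm2_sq _)
    (fun i hi k hk hik => by
      have := hDub i (hAS hi) k (hAS hk)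
      calc ip (i - k) (i - k) = norm2 (i - k) ^ 2 := (norm2_sq _).symm
        _ ≤ D ^ 2 := pow_le_pow_left₀ (norm2_nonneg _) this 2)
    (fun i hi k hk hik => by
      have := hDub i (hBS hi) k (hBS hk)
      calc ip (i - k) (i - k) = norm2 (i - k) ^ 2 := (norm2_sq _).symm
        _ ≤ D ^ 2 := pow_le_pow_left₀ (norm2_nonneg _) this 2)
  have hAne : A.Nonempty := by
    rcases A.eq_empty_or_nonempty with h | h
    · rw [h] at hα1; simp at hα1
    · exact h
  have hBne : B.Nonempty := by
    rcases B.eq_empty_or_nonempty with h | h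
    · rw [h] at hβ1; simp at hβ1
    · exact h
  have hpA : 1 ≤ A.card := Finset.card_pos.2 hAne
  have hpB : 1 ≤ B.card := Finset.card_pos.2 hBne
  have hfrac := frac_bound hn hpA hpB hcard
  have hD2 : (0:ℝ) ≤ D ^ 2 := sq_nonneg D
  have hn0 : (0:ℝ) < (n:ℝ) := by exact_mod_cast hn
  -- combine
  have hcomb : 2 * d ^ 2 ≤ D ^ 2 *
      (2 - (if Even n then 4 / ((n:ℝ) + 2)
        else 4 * ((n:ℝ) + 2) / (((n:ℝ) + 1) * ((n:ℝ) + 3)))) := by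
    calc 2 * d ^ 2 ≤ D ^ 2 * (2 - 1 / (A.card : ℝ) - 1 / (B.card : ℝ)) := hkey
      _ ≤ _ := by
          have h := hfrac
          have h2 : (2:ℝ) - 1 / (A.card : ℝ) - 1 / (B.card : ℝ)
              ≤ 2 - (if Even n then 4 / ((n:ℝ) + 2)
                else 4 * ((n:ℝ) + 2) / (((n:ℝ) + 1) * ((n:ℝ) + 3))) := by
            linarith
          calc D ^ 2 * (2 - 1 / (A.card : ℝ) - 1 / (B.card : ℝ))
              ≤ D ^ 2 * (2 - (if Even n then 4 / ((n:ℝ) + 2)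
                else 4 * ((n:ℝ) + 2) / (((n:ℝ) + 1) * ((n:ℝ) + 3)))) :=
              mul_le_mul_of_nonneg_left h2 hD2
            _ = _ := rfl
  have hDd0 : (0:ℝ) ≤ D / d := div_nonneg hD0.le hd0.le
  split_ifs with heven
  · rw [if_pos heven] at hcomb
    have he : 2 - 4/((n:ℝ)+2) = 2*(n:ℝ)/((n:ℝ)+2) := by
      field_simp
      ring
    rw [he] at hcomb
    have h3 : 2*d^2 * ((n:ℝ)+2) ≤ D^2 * (2*(n:ℝ)) := by
      rw [← mul_div_assoc] at hcomb
      exact (le_div_iff₀ (by linarith)).1 hcomb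
    apply rpow_half_le (by positivity) hDd0
    have he2 : (1:ℝ) + 2/(n:ℝ) = ((n:ℝ)+2)/(n:ℝ) := by field_simp
    rw [he2, div_pow, le_div_iff₀ (pow_pos hd0 2), div_mul_eq_mul_div, div_le_iff₀ hn0]
    nlinarith [h3]
  · rw [if_neg heven] at hcomb
    have hpos2 : (0:ℝ) < ((n:ℝ)+1)*((n:ℝ)+3) := by positivity
    have he : 2 - 4*((n:ℝ)+2)/(((n:ℝ)+1)*((n:ℝ)+3))
        = (2*(n:ℝ)^2+4*(n:ℝ)-2)/(((n:ℝ)+1)*((n:ℝ)+3)) := by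
      field_simp
      ring
    rw [he] at hcomb
    have h3 : 2*d^2*(((n:ℝ)+1)*((n:ℝ)+3)) ≤ D^2*(2*(n:ℝ)^2+4*(n:ℝ)-2) := by
      rw [← mul_div_assoc] at hcomb
      exact (le_div_iff₀ hpos2).1 hcomb
    have hq1 : (0:ℝ) < (n:ℝ)^2+2*(n:ℝ)-1 := by nlinarith
    have hinv : ((n:ℝ)+2)⁻¹ < 1 := by
      apply inv_lt_one_of_one_lt₀
      linarith
    have hn1 : (1:ℝ) ≤ (n:ℝ) := by exact_mod_cast hn
    have hdenpos : (0:ℝ) < (n:ℝ) - ((n:ℝ)+2)⁻¹ := by linarith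
    have he2 : (1:ℝ) + 2/((n:ℝ) - ((n:ℝ)+2)⁻¹)
        = ((n:ℝ)^2+4*(n:ℝ)+3)/((n:ℝ)^2+2*(n:ℝ)-1) := by
      have hn2 : ((n:ℝ)+2) ≠ 0 := by positivity
      have hX : (n:ℝ) - ((n:ℝ)+2)⁻¹ = ((n:ℝ)^2+2*(n:ℝ)-1)/((n:ℝ)+2) := by
        rw [inv_eq_one_div]
        field_simp
      rw [hX, div_div_eq_mul_div]
      rw [eq_div_iff hq1.ne', add_mul, div_mul_cancel₀ _ hq1.ne']
      ring
    have hc0 : (0:ℝ) ≤ 1 + 2/((n:ℝ) - ((n:ℝ)+2)⁻¹) := by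
      have := div_nonneg (show (0:ℝ) ≤ 2 by norm_num) hdenpos.le
      linarith
    apply rpow_half_le hc0 hDd0
    rw [he2, div_pow, le_div_iff₀ (pow_pos hd0 2), div_mul_eq_mul_div, div_le_iff₀ hq1]
    nlinarith [h3]
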